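/- arXiv:2307.08920 — 4 statements merged into one kernel-verified Lean document; each statement's English description precedes it below -/
import Mathlib

section
/- Let A − B K_i be Hurwitz and let P_i be the unique symmetric positive definite solution of the algebraic Lyapunov equation (A − B K_i)^T P_i + P_i (A − B K_i) + K_i^T R K_i + Q = 0, with K_{i+1} = R^{-1} B^T P_i. Then A − B K_{i+1} is Hurwitz. -/
open Matrix

section Aux

variable {k l p : ℕ}

private lemma mapC_conjTranspose (M : Matrix (Fin k) (Fin l) ℝ) :
    (M.map (algebraMap ℝ ℂ))ᴴ = Mᵀ.map (algebraMap ℝ ℂ) := by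
  ext i j
  simp [conjTranspose_apply, Complex.conj_ofReal]

private lemma mapC_add (M N : Matrix (Fin k) (Fin l) ℝ) :
    ((M + N).map (algebraMap ℝ ℂ)) = M.map (algebraMap ℝ ℂ) + N.map (algebraMap ℝ ℂ) := by
  ext i j; simp

private lemma mapC_sub (M N : Matrix (Fin k) (Fin l) ℝ) :
    ((M - N).map (algebraMap ℝ ℂ)) = M.map (algebraMap ℝ ℂ) - N.map (algebraMap ℝ ℂ) := by
  ext i j; simp

private lemma mapC_zero :
    ((0 : Matrix (Fin k) (Fin l) ℝ).map (algebraMap ℝ ℂ)) = 0 := by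
  ext i j; simp

private lemma re_quad_eq (M : Matrix (Fin k) (Fin k) ℝ) (v : Fin k → ℂ) :
    (star v ⬝ᵥ (M.map (algebraMap ℝ ℂ)) *ᵥ v).re
      = (fun i => (v i).re) ⬝ᵥ (M *ᵥ fun i => (v i).re)
        + (fun i => (v i).im) ⬝ᵥ (M *ᵥ fun i => (v i).im) := by
  simp only [dotProduct, mulVec, Pi.star_apply, Complex.re_sum, ← Finset.sum_add_distrib]
  refine Finset.sum_congr rfl fun i _ => ?_
  simp only [Complex.re_sum, Finset.mul_sum, ← Finset.sum_add_distrib]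
  refine Finset.sum_congr rfl fun j _ => ?_
  simp [Complex.mul_re, Complex.mul_im]

private lemma re_quad_nonneg {M : Matrix (Fin k) (Fin k) ℝ} (hM : M.PosSemidef)
    (v : Fin k → ℂ) : 0 ≤ (star v ⬝ᵥ (M.map (algebraMap ℝ ℂ)) *ᵥ v).re := by
  rw [re_quad_eq]
  have h1 := hM.dotProduct_mulVec_nonneg fun i => (v i).re
  have h2 := hM.dotProduct_mulVec_nonneg fun i => (v i).im
  simp only [star_trivial] at h1 h2
  exact add_nonneg h1 h2

private lemma re_quad_pos {M : Matrix (Fin k) (Fin k) ℝ} (hM : M.PosDef)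
    {v : Fin k → ℂ} (hv : v ≠ 0) : 0 < (star v ⬝ᵥ (M.map (algebraMap ℝ ℂ)) *ᵥ v).re := by
  rw [re_quad_eq]
  have hxy : (fun i => (v i).re) ≠ 0 ∨ (fun i => (v i).im) ≠ 0 := by
    by_contra h
    push_neg at h
    refine hv (funext fun i => ?_)
    have h1 := congrFun h.1 i
    have h2 := congrFun h.2 i
    exact Complex.ext h1 h2
  rcases hxy with hx | hy
  · have := hM.dotProduct_mulVec_pos hx
    simp only [star_trivial] at this
    have h2 := hM.posSemidef.dotProduct_mulVec_nonneg fun i => (v i).im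
    simp only [star_trivial] at h2
    linarith
  · have := hM.dotProduct_mulVec_pos hy
    simp only [star_trivial] at this
    have h2 := hM.posSemidef.dotProduct_mulVec_nonneg fun i => (v i).re
    simp only [star_trivial] at h2
    linarith

private lemma quad_shift (M N : Matrix (Fin p) (Fin k) ℂ)
    (v : Fin k → ℂ) :
    star v ⬝ᵥ (Mᴴ * N) *ᵥ v = star (M *ᵥ v) ⬝ᵥ N *ᵥ v := by
  rw [← Matrix.mulVec_mulVec, dotProduct_mulVec, ← star_mulVec]

private lemma spectrum_exists_eigenvector {M : Matrix (Fin k) (Fin k) ℂ} {μ : ℂ}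
    (hμ : μ ∈ spectrum ℂ M) : ∃ v : Fin k → ℂ, v ≠ 0 ∧ M *ᵥ v = μ • v := by
  rw [← AlgEquiv.spectrum_eq (Matrix.toLinAlgEquiv' : Matrix (Fin k) (Fin k) ℂ ≃ₐ[ℂ] _),
    ← Module.End.hasEigenvalue_iff_mem_spectrum] at hμ
  obtain ⟨v, hv⟩ := hμ.exists_hasEigenvector
  refine ⟨v, hv.2, ?_⟩
  have := hv.apply_eq_smul
  rwa [Matrix.toLinAlgEquiv'_apply] at this

private lemma vec_eq_zero_of_re_dot_self {u : Fin k → ℂ} (h : (star u ⬝ᵥ u).re = 0) :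
    u = 0 := by
  have hsum : ∑ i, Complex.normSq (u i) = 0 := by
    rw [← h]
    simp [dotProduct, Complex.re_sum, Complex.normSq_apply, Complex.mul_re]
  have := (Finset.sum_eq_zero_iff_of_nonneg (fun i _ => Complex.normSq_nonneg (u i))).1 hsum
  funext i
  exact Complex.normSq_eq_zero.1 (this i (Finset.mem_univ i))

end Aux
open Matrix

/-- `A` is Hurwitz: every (complex) eigenvalue has strictly negative real part. -/
def IsHurwitz {n : ℕ} (A : Matrix (Fin n) (Fin n) ℝ) : Prop :=
  ∀ μ ∈ spectrum ℂ (A.map (algebraMap ℝ ℂ)), μ.re < 0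

/-- `(C, A)` is detectable: no eigenvector of `A` for an eigenvalue with nonnegative real
part lies in the kernel of `C`. -/
def Detectable {n p : ℕ} (C : Matrix (Fin p) (Fin n) ℝ) (A : Matrix (Fin n) (Fin n) ℝ) :
    Prop :=
  ∀ (μ : ℂ) (v : Fin n → ℂ), v ≠ 0 →
    (A.map (algebraMap ℝ ℂ)).mulVec v = μ • v → 0 ≤ μ.re →
    (C.map (algebraMap ℝ ℂ)).mulVec v ≠ 0

/-- The positive semidefinite square root of a positive semidefinite real matrix, spelled out
as `Matrix.PosSemidef.sqrt` was defined in the older Mathlib (since removed). -/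
noncomputable def posSemidefSqrt {n : ℕ} {Q : Matrix (Fin n) (Fin n) ℝ} (hQ : Q.PosSemidef) :
    Matrix (Fin n) (Fin n) ℝ :=
  (hQ.1.eigenvectorUnitary : Matrix (Fin n) (Fin n) ℝ) *
    diagonal (fun i => Real.sqrt (hQ.1.eigenvalues i)) *
    (star hQ.1.eigenvectorUnitary : Matrix (Fin n) (Fin n) ℝ)

/-- One step of Kleinman's algorithm preserves stability: if `A − B Kᵢ` is Hurwitz,
`Pᵢ` is the symmetric positive definite solution of the closed-loop Lyapunov equation, and
`Kᵢ₊₁ = R⁻¹ Bᵀ Pᵢ`, then `A − B Kᵢ₊₁` is Hurwitz. -/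
theorem kleinman_step_hurwitz {n m : ℕ}
    (A : Matrix (Fin n) (Fin n) ℝ) (B : Matrix (Fin n) (Fin m) ℝ)
    (Q : Matrix (Fin n) (Fin n) ℝ) (R : Matrix (Fin m) (Fin m) ℝ)
    (hQ : Q.PosSemidef) (hR : R.PosDef)
    (hdet : Detectable (posSemidefSqrt hQ) A)
    (hstab : ∃ K : Matrix (Fin m) (Fin n) ℝ, IsHurwitz (A - B * K))
    (Ki Kip : Matrix (Fin m) (Fin n) ℝ) (Pi : Matrix (Fin n) (Fin n) ℝ)
    (hKi : IsHurwitz (A - B * Ki))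
    (hPi : Pi.IsSymm) (hPipd : Pi.PosDef)
    (hALE : (A - B * Ki)ᵀ * Pi + Pi * (A - B * Ki) + Kiᵀ * R * Ki + Q = 0)
    (hKip : Kip = R⁻¹ * Bᵀ * Pi) :
    IsHurwitz (A - B * Kip) := by
  intro μ hμ
  obtain ⟨v, hv0, hvec⟩ := spectrum_exists_eigenvector hμ
  -- algebraic preliminaries
  have hRsymm : Rᵀ = R := by
    simpa using hR.isHermitian.eq
  have e1 : R * Kip = Bᵀ * Pi := by
    rw [hKip, ← Matrix.mul_assoc, ← Matrix.mul_assoc,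
      Matrix.mul_nonsing_inv _ hR.det_pos.ne'.isUnit, Matrix.one_mul]
  have e2 : Pi * B = Kipᵀ * R := by
    have h := congrArg Matrix.transpose e1
    simp only [transpose_mul, transpose_transpose, hRsymm, hPi.eq] at h
    exact h.symm
  -- the closed-loop Lyapunov identity for Kip
  have keyR : (A - B * Kip)ᵀ * Pi + Pi * (A - B * Kip)
      + (Q + Kipᵀ * R * Kip + (Ki - Kip)ᵀ * R * (Ki - Kip)) = 0 := by
    have expand : (A - B * Kip)ᵀ * Pi + Pi * (A - B * Kip)
        + (Q + Kipᵀ * R * Kip + (Ki - Kip)ᵀ * R * (Ki - Kip))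
        = ((A - B * Ki)ᵀ * Pi + Pi * (A - B * Ki) + Kiᵀ * R * Ki + Q)
          + ((Ki - Kip)ᵀ * (Bᵀ * Pi - R * Kip) + (Pi * B - Kipᵀ * R) * (Ki - Kip)) := by
      simp only [transpose_sub, transpose_mul, Matrix.sub_mul, Matrix.mul_sub, Matrix.mul_assoc]
      abel
    rw [expand, hALE, ← e1, e2]
    simp
  -- scalar quantities
  set p : ℂ := star v ⬝ᵥ (Pi.map (algebraMap ℝ ℂ)) *ᵥ v with hp_def
  have hA1 : star v ⬝ᵥ (((A - B * Kip)ᵀ * Pi).map (algebraMap ℝ ℂ)) *ᵥ v = (starRingEnd ℂ) μ * p := by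
    rw [Matrix.map_mul, ← mapC_conjTranspose, quad_shift, hvec, star_smul, smul_dotProduct]
    simp [hp_def]
  have hA2 : star v ⬝ᵥ ((Pi * (A - B * Kip)).map (algebraMap ℝ ℂ)) *ᵥ v = μ * p := by
    rw [Matrix.map_mul, ← Matrix.mulVec_mulVec, hvec, Matrix.mulVec_smul, dotProduct_smul]
    simp [hp_def]
  have keyC := congrArg (fun M : Matrix (Fin n) (Fin n) ℝ =>
    star v ⬝ᵥ (M.map (algebraMap ℝ ℂ)) *ᵥ v) keyR
  simp only [mapC_add, Matrix.add_mulVec, dotProduct_add, mapC_zero,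
    Matrix.zero_mulVec, dotProduct_zero] at keyC
  rw [hA1, hA2] at keyC
  -- real parts
  have hre := congrArg Complex.re keyC
  simp only [Complex.add_re, Complex.mul_re, Complex.conj_re, Complex.conj_im,
    Complex.zero_re, neg_mul, neg_neg, sub_neg_eq_add] at hre
  have hppos : 0 < p.re := re_quad_pos hPipd hv0
  have hqQ : 0 ≤ (star v ⬝ᵥ (Q.map (algebraMap ℝ ℂ)) *ᵥ v).re := re_quad_nonneg hQ v
  have hKipT : Kipᴴ = Kipᵀ := by ext i j; simp [conjTranspose_apply]
  have hDT : (Ki - Kip)ᴴ = (Ki - Kip)ᵀ := by ext i j; simp [conjTranspose_apply]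
  have hq1 : 0 ≤ (star v ⬝ᵥ ((Kipᵀ * R * Kip).map (algebraMap ℝ ℂ)) *ᵥ v).re := by
    have := hR.posSemidef.conjTranspose_mul_mul_same Kip
    rw [hKipT] at this
    exact re_quad_nonneg this v
  have hq2 : 0 ≤ (star v ⬝ᵥ (((Ki - Kip)ᵀ * R * (Ki - Kip)).map (algebraMap ℝ ℂ)) *ᵥ v).re := by
    have := hR.posSemidef.conjTranspose_mul_mul_same (Ki - Kip)
    rw [hDT] at this
    exact re_quad_nonneg this v
  -- conclude μ.re ≤ 0
  by_contra hlt
  push_neg at hlt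
  have hμre : μ.re = 0 := le_antisymm (by nlinarith [hppos, hqQ, hq1, hq2]) hlt
  rw [hμre] at hre
  have hq1z : (star v ⬝ᵥ ((Kipᵀ * R * Kip).map (algebraMap ℝ ℂ)) *ᵥ v).re = 0 := by linarith
  have hqQz : (star v ⬝ᵥ (Q.map (algebraMap ℝ ℂ)) *ᵥ v).re = 0 := by linarith
  -- Kip.map (algebraMap ℝ ℂ) *ᵥ v = 0
  have hw : (Kip.map (algebraMap ℝ ℂ)) *ᵥ v = 0 := by
    by_contra hw0
    have hpos := re_quad_pos hR hw0
    rw [Matrix.map_mul, Matrix.map_mul, ← mapC_conjTranspose, Matrix.mul_assoc, quad_shift,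
      ← Matrix.mulVec_mulVec] at hq1z
    linarith [hpos]
  -- A *ᵥ v = μ • v
  have hAv : (A.map (algebraMap ℝ ℂ)) *ᵥ v = μ • v := by
    rw [mapC_sub, Matrix.map_mul, Matrix.sub_mulVec, ← Matrix.mulVec_mulVec, hw,
      Matrix.mulVec_zero, sub_zero] at hvec
    exact hvec
  -- sqrt Q kills v
  have hS : posSemidefSqrt hQ * posSemidefSqrt hQ = Q := by
    have hsp := hQ.1.spectral_theorem
    have hU : (star hQ.1.eigenvectorUnitary : Matrix (Fin n) (Fin n) ℝ) *
        (hQ.1.eigenvectorUnitary : Matrix (Fin n) (Fin n) ℝ) = 1 :=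
      Unitary.star_mul_self_of_mem hQ.1.eigenvectorUnitary.2
    conv_rhs => rw [hsp]
    simp only [posSemidefSqrt, Unitary.conjStarAlgAut_apply]
    simp only [Matrix.mul_assoc]
    rw [← Matrix.mul_assoc _ (hQ.1.eigenvectorUnitary : Matrix (Fin n) (Fin n) ℝ), hU,
      Matrix.one_mul, ← Matrix.mul_assoc (diagonal _) (diagonal _), diagonal_mul_diagonal]
    have hd : (fun i => √(hQ.1.eigenvalues i) * √(hQ.1.eigenvalues i)) =
        (RCLike.ofReal ∘ hQ.1.eigenvalues : Fin n → ℝ) :=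
      funext fun i => by simp [Real.mul_self_sqrt (hQ.eigenvalues_nonneg i)]
    rw [hd]
  have hsq : (posSemidefSqrt hQ)ᵀ = posSemidefSqrt hQ := by
    rw [← conjTranspose_eq_transpose_of_trivial]
    simp [posSemidefSqrt, conjTranspose_mul, Matrix.mul_assoc, diagonal_conjTranspose,
      ← star_eq_conjTranspose]
    simp only [star_eq_conjTranspose, conjTranspose_eq_transpose_of_trivial, transpose_transpose]
  have hST : ((posSemidefSqrt hQ).map (algebraMap ℝ ℂ))ᴴ = (posSemidefSqrt hQ).map (algebraMap ℝ ℂ) := by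
    rw [mapC_conjTranspose, hsq]
  have hu : ((posSemidefSqrt hQ).map (algebraMap ℝ ℂ)) *ᵥ v = 0 := by
    apply vec_eq_zero_of_re_dot_self
    rw [← quad_shift, hST, ← Matrix.map_mul, hS, hqQz]
  exact hdet μ v hv0 hAv hlt hu
end

section
/- If P* solves the CARE A^T P + P A − P B R^{-1} B^T P + Q = 0 with P* symmetric positive definite and (Q^{1/2}, A) detectable, then A − B R^{-1} B^T P* is Hurwitz. -/
open Matrix
open ComplexOrder

/-- The square root of a positive semidefinite matrix, as defined in Mathlib of December 2024
(`Matrix.PosSemidef.sqrt`, since removed). -/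
noncomputable def Matrix.PosSemidef.sqrt {n : Type*} [Fintype n] [DecidableEq n]
    {A : Matrix n n ℝ} (hA : A.PosSemidef) : Matrix n n ℝ :=
  hA.1.eigenvectorUnitary.1 * diagonal ((↑) ∘ (√·) ∘ hA.1.eigenvalues) *
    (star hA.1.eigenvectorUnitary : Matrix n n ℝ)

theorem Matrix.PosSemidef.sqrt_mul_self {n : Type*} [Fintype n] [DecidableEq n]
    {A : Matrix n n ℝ} (hA : A.PosSemidef) : hA.sqrt * hA.sqrt = A := by
  unfold Matrix.PosSemidef.sqrt
  have hU : (star hA.1.eigenvectorUnitary : Matrix n n ℝ) * hA.1.eigenvectorUnitary.1 = 1 := by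
    simp
  conv_rhs => rw [hA.1.spectral_theorem, Unitary.conjStarAlgAut_apply]
  calc _ = hA.1.eigenvectorUnitary.1 * (diagonal ((↑) ∘ (√·) ∘ hA.1.eigenvalues) *
        ((star hA.1.eigenvectorUnitary : Matrix n n ℝ) * hA.1.eigenvectorUnitary.1) *
        diagonal ((↑) ∘ (√·) ∘ hA.1.eigenvalues)) *
        (star hA.1.eigenvectorUnitary : Matrix n n ℝ) := by simp only [Matrix.mul_assoc]
    _ = _ := by
      rw [hU, Matrix.mul_one, diagonal_mul_diagonal]
      congr 3
      funext i
      simp [Real.mul_self_sqrt (hA.eigenvalues_nonneg i)]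

theorem Matrix.PosSemidef.posSemidef_sqrt {n : Type*} [Fintype n] [DecidableEq n]
    {A : Matrix n n ℝ} (hA : A.PosSemidef) : hA.sqrt.PosSemidef := by
  unfold Matrix.PosSemidef.sqrt
  have h : (star hA.1.eigenvectorUnitary : Matrix n n ℝ) = (hA.1.eigenvectorUnitary.1)ᴴ := rfl
  rw [h]
  apply PosSemidef.mul_mul_conjTranspose_same
  rw [posSemidef_diagonal_iff]
  intro i
  simp [Real.sqrt_nonneg]

/-- conjTranspose of a real-entried complex matrix is the map of the transpose. -/
lemma care_ct_map {k l : ℕ} (M : Matrix (Fin k) (Fin l) ℝ) :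
    (M.map (algebraMap ℝ ℂ))ᴴ = Mᵀ.map (algebraMap ℝ ℂ) := by
  ext i j
  simp [conjTranspose_apply, Complex.conj_ofReal]

/-- A hermitian quadratic form `v* (Nᴴ N) v` is the squared norm of `N v`. -/
lemma care_herm_quad {k l : ℕ} (N : Matrix (Fin k) (Fin l) ℂ) (v : Fin l → ℂ) :
    star v ⬝ᵥ (Nᴴ * N) *ᵥ v = star (N *ᵥ v) ⬝ᵥ (N *ᵥ v) := by
  rw [← mulVec_mulVec, dotProduct_mulVec, star_mulVec]

set_option maxHeartbeats 1000000 in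
/-- If `P*` is a symmetric positive definite solution of the CARE and `(Q^{1/2}, A)` is
detectable, then the closed-loop matrix `A − B R⁻¹ Bᵀ P*` is Hurwitz. -/
theorem care_solution_stabilizing {n m : ℕ}
    (A : Matrix (Fin n) (Fin n) ℝ) (B : Matrix (Fin n) (Fin m) ℝ)
    (Q : Matrix (Fin n) (Fin n) ℝ) (R : Matrix (Fin m) (Fin m) ℝ)
    (hQ : Q.PosSemidef) (hR : R.PosDef)
    (hdet : Detectable hQ.sqrt A)
    (Pstar : Matrix (Fin n) (Fin n) ℝ)
    (hPstar_symm : Pstar.IsSymm) (hPstar_pd : Pstar.PosDef)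
    (hCARE : Aᵀ * Pstar + Pstar * A - Pstar * B * R⁻¹ * Bᵀ * Pstar + Q = 0) :
    IsHurwitz (A - B * (R⁻¹ * Bᵀ * Pstar)) := by
  classical
  intro μ hμ
  by_contra hre
  push_neg at hre
  set c : ℝ →+* ℂ := algebraMap ℝ ℂ with hcdef
  set Acl : Matrix (Fin n) (Fin n) ℝ := A - B * (R⁻¹ * Bᵀ * Pstar) with hAcl
  -- obtain an eigenvector
  rw [← AlgEquiv.spectrum_eq
      (Matrix.toLinAlgEquiv' : Matrix (Fin n) (Fin n) ℂ ≃ₐ[ℂ] _)] at hμ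
  obtain ⟨v, hv⟩ := (Module.End.hasEigenvalue_iff_mem_spectrum.mpr hμ).exists_hasEigenvector
  have hvne : v ≠ 0 := hv.right
  have hmv : (Acl.map c) *ᵥ v = μ • v := by
    have := hv.apply_eq_smul
    rwa [Matrix.toLinAlgEquiv'_apply] at this
  -- real symmetric facts
  have hRs : Rᵀ = R := by
    rw [← conjTranspose_eq_transpose_of_trivial]; exact hR.isHermitian
  have hRinv : (R⁻¹).PosDef := hR.inv
  set T : Matrix (Fin m) (Fin m) ℝ := hRinv.posSemidef.sqrt with hT
  have hT2 : T * T = R⁻¹ := hRinv.posSemidef.sqrt_mul_self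
  have hTs : Tᵀ = T := by
    rw [← conjTranspose_eq_transpose_of_trivial]
    exact hRinv.posSemidef.posSemidef_sqrt.isHermitian
  have hSQ2 : hQ.sqrt * hQ.sqrt = Q := hQ.sqrt_mul_self
  have hSQs : hQ.sqrtᵀ = hQ.sqrt := by
    rw [← conjTranspose_eq_transpose_of_trivial]
    exact hQ.posSemidef_sqrt.isHermitian
  set SP : Matrix (Fin n) (Fin n) ℝ := hPstar_pd.posSemidef.sqrt with hSP
  have hSP2 : SP * SP = Pstar := hPstar_pd.posSemidef.sqrt_mul_self
  have hSPs : SPᵀ = SP := by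
    rw [← conjTranspose_eq_transpose_of_trivial]
    exact hPstar_pd.posSemidef.posSemidef_sqrt.isHermitian
  set W : Matrix (Fin m) (Fin n) ℝ := T * Bᵀ * Pstar with hWdef
  have hWT : Wᵀ = Pstar * B * T := by
    rw [hWdef, transpose_mul, transpose_mul, transpose_transpose, hTs, hPstar_symm.eq]
    simp only [Matrix.mul_assoc]
  have hW : Wᵀ * W = Pstar * B * R⁻¹ * Bᵀ * Pstar := by
    rw [hWT, hWdef]
    simp only [Matrix.mul_assoc]
    rw [← Matrix.mul_assoc T T, hT2]
  have hAclT : Aclᵀ = Aᵀ - Pstar * B * R⁻¹ * Bᵀ := by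
    rw [hAcl, transpose_sub, transpose_mul, transpose_mul, transpose_mul,
      transpose_transpose, transpose_nonsing_inv, hRs, hPstar_symm.eq]
    simp only [Matrix.mul_assoc]
  have hkey : Aclᵀ * Pstar + Pstar * Acl + (Q + Wᵀ * W) = 0 := by
    rw [hW, hAclT, hAcl, ← hCARE]
    simp only [Matrix.sub_mul, Matrix.mul_sub, Matrix.mul_assoc]
    abel
  -- map to ℂ
  have hkeyC : (Acl.map c)ᴴ * Pstar.map c + Pstar.map c * Acl.map c
      + (Q.map c + (W.map c)ᴴ * W.map c) = 0 := by
    rw [care_ct_map, care_ct_map, ← Matrix.map_mul, ← Matrix.map_mul, ← Matrix.map_mul,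
      ← Matrix.map_add, ← Matrix.map_add, ← Matrix.map_add, hkey]
    · ext i j; simp
    all_goals exact fun a b => map_add c a b
  -- quadratic form along the eigenvector
  have hs := congrArg (fun M : Matrix (Fin n) (Fin n) ℂ => star v ⬝ᵥ M *ᵥ v) hkeyC
  simp only [add_mulVec, dotProduct_add, zero_mulVec, dotProduct_zero] at hs
  -- rewrite each term
  have ht1 : star v ⬝ᵥ ((Acl.map c)ᴴ * Pstar.map c) *ᵥ v
      = (starRingEnd ℂ) μ * (star v ⬝ᵥ (Pstar.map c) *ᵥ v) := by
    rw [← mulVec_mulVec, dotProduct_mulVec, ← star_mulVec, hmv, star_smul,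
      smul_dotProduct]
    simp [dotProduct_mulVec]
  have ht2 : star v ⬝ᵥ (Pstar.map c * Acl.map c) *ᵥ v
      = μ * (star v ⬝ᵥ (Pstar.map c) *ᵥ v) := by
    rw [← mulVec_mulVec, hmv, mulVec_smul, dotProduct_smul]
    simp
  have hQc : Q.map c = (hQ.sqrt.map c)ᴴ * hQ.sqrt.map c := by
    rw [care_ct_map, hSQs, ← Matrix.map_mul, hSQ2]
  have hPc : Pstar.map c = (SP.map c)ᴴ * SP.map c := by
    rw [care_ct_map, hSPs, ← Matrix.map_mul, hSP2]
  set u1 : Fin n → ℂ := (hQ.sqrt.map c) *ᵥ v with hu1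
  set u2 : Fin m → ℂ := (W.map c) *ᵥ v with hu2
  set u3 : Fin n → ℂ := (SP.map c) *ᵥ v with hu3
  have ht3 : star v ⬝ᵥ (Q.map c) *ᵥ v = star u1 ⬝ᵥ u1 := by
    rw [hQc, care_herm_quad]
  have ht4 : star v ⬝ᵥ ((W.map c)ᴴ * W.map c) *ᵥ v = star u2 ⬝ᵥ u2 :=
    care_herm_quad _ _
  have htp : star v ⬝ᵥ (Pstar.map c) *ᵥ v = star u3 ⬝ᵥ u3 := by
    rw [hPc, care_herm_quad]
  rw [ht1, ht2, ht3, ht4, htp] at hs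
  -- nonnegativity facts
  have h1 : (0 : ℂ) ≤ star u1 ⬝ᵥ u1 := dotProduct_star_self_nonneg u1
  have h2 : (0 : ℂ) ≤ star u2 ⬝ᵥ u2 := dotProduct_star_self_nonneg u2
  have h3 : (0 : ℂ) ≤ star u3 ⬝ᵥ u3 := dotProduct_star_self_nonneg u3
  have h1re : 0 ≤ (star u1 ⬝ᵥ u1).re := (Complex.le_def.mp h1).1
  have h2re : 0 ≤ (star u2 ⬝ᵥ u2).re := (Complex.le_def.mp h2).1
  have h3re : 0 ≤ (star u3 ⬝ᵥ u3).re := (Complex.le_def.mp h3).1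
  have h1im : (star u1 ⬝ᵥ u1).im = 0 := ((Complex.le_def.mp h1).2).symm
  have h2im : (star u2 ⬝ᵥ u2).im = 0 := ((Complex.le_def.mp h2).2).symm
  have h3im : (star u3 ⬝ᵥ u3).im = 0 := ((Complex.le_def.mp h3).2).symm
  -- take the real part of the scalar equation
  have hsre := congrArg Complex.re hs
  simp only [Complex.add_re, Complex.mul_re, Complex.conj_re, Complex.conj_im,
    Complex.zero_re, h3im, mul_zero, sub_zero, neg_mul, neg_zero, zero_mul,
    add_zero] at hsre
  -- hsre : μ.re * p.re + μ.re * p.re + (z1.re + z2.re) = 0  (up to sign juggling)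
  have hmul : 0 ≤ μ.re * (star u3 ⬝ᵥ u3).re := mul_nonneg hre h3re
  have hz1 : (star u1 ⬝ᵥ u1).re = 0 := by linarith [hsre, hmul, h1re, h2re]
  have hz2 : (star u2 ⬝ᵥ u2).re = 0 := by linarith [hsre, hmul, h1re, h2re]
  have hu1z : u1 = 0 := by
    rw [← dotProduct_star_self_eq_zero (v := u1)]
    exact Complex.ext hz1 h1im
  have hu2z : u2 = 0 := by
    rw [← dotProduct_star_self_eq_zero (v := u2)]
    exact Complex.ext hz2 h2im
  -- the feedback term annihilates v
  have hfact : B * (R⁻¹ * Bᵀ * Pstar) = (B * T) * W := by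
    rw [hWdef]
    simp only [Matrix.mul_assoc]
    rw [← Matrix.mul_assoc T T, hT2]
  have hKv : ((B * (R⁻¹ * Bᵀ * Pstar)).map c) *ᵥ v = 0 := by
    rw [hfact, Matrix.map_mul, ← mulVec_mulVec, ← hu2, hu2z, mulVec_zero]
  have hAv : (A.map c) *ᵥ v = μ • v := by
    have : Acl.map c = A.map c - (B * (R⁻¹ * Bᵀ * Pstar)).map c := by
      rw [hAcl]; exact Matrix.map_sub c (fun a b => map_sub c a b) _ _
    rw [this, sub_mulVec, hKv, sub_zero] at hmv
    exact hmv
  exact hdet μ v hvne hAv hre hu1z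
end

section
/- Suppose the data matrix I_{B(x,x)} ∈ R^{l × n(n+1)/2}, whose k-th row is ∫_{t_{k-1}}^{t_k} B(x(τ),x(τ))^T dτ, has full column rank, and K_i is such that A_i = A − B K_i is Hurwitz. Then the EIRL regression matrix Θ_i = δ_{xx} − 2[I_{B(x,x)} W_i^T + I_{B(x,gu)} + I_{B(x,w)}] has full column rank n(n+1)/2. -/
open Matrix
open scoped Kronecker

abbrev SymIdx (n : ℕ) := {p : Fin n × Fin n // p.1 ≤ p.2}

noncomputable def vfun {n : ℕ} (P : Matrix (Fin n) (Fin n) ℝ) : SymIdx n → ℝ :=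
  fun p => if p.1.1 = p.1.2 then P p.1.1 p.1.2 else 2 * P p.1.1 p.1.2

noncomputable def Bfun {n : ℕ} (x y : Fin n → ℝ) : SymIdx n → ℝ :=
  fun p => if p.1.1 = p.1.2 then x p.1.1 * y p.1.1
           else (x p.1.1 * y p.1.2 + x p.1.2 * y p.1.1) / 2

noncomputable def kron {n : ℕ} (x y : Fin n → ℝ) : Fin n × Fin n → ℝ :=
  fun p => x p.1 * y p.2

lemma symm_apply {n : ℕ} {P : Matrix (Fin n) (Fin n) ℝ} (hP : Pᵀ = P) (i j : Fin n) :
    P j i = P i j := by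
  conv_lhs => rw [← hP]
  simp [Matrix.transpose_apply]

lemma dot_Bfun_vfun {n : ℕ} (P : Matrix (Fin n) (Fin n) ℝ) (hP : Pᵀ = P) (y z : Fin n → ℝ) :
    Bfun y z ⬝ᵥ vfun P = y ⬝ᵥ P.mulVec z := by
  classical
  set G : Fin n × Fin n → ℝ := fun p => y p.1 * (P p.1 p.2 * z p.2) with hG
  have hRHS : y ⬝ᵥ P.mulVec z = ∑ p : Fin n × Fin n, G p := by
    rw [Fintype.sum_prod_type]
    simp [dotProduct, mulVec, G, Finset.mul_sum]
  have e1 : ∀ p : SymIdx n, Bfun y z p * vfun P p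
      = G p.1 + (if p.1.1 = p.1.2 then 0 else G p.1.swap) := by
    rintro ⟨⟨i, j⟩, hij⟩
    by_cases h : i = j
    · subst h; simp [Bfun, vfun, G]; ring
    · have hPij := symm_apply hP i j
      simp only [Bfun, vfun, G, if_neg h, Prod.swap_prod_mk]
      rw [hPij]
      ring
  have hLHS : Bfun y z ⬝ᵥ vfun P
      = ∑ p ∈ Finset.univ.filter (fun p : Fin n × Fin n => p.1 ≤ p.2),
          (G p + if p.1 = p.2 then 0 else G p.swap) := by
    rw [dotProduct]
    rw [Finset.sum_congr rfl (fun p _ => e1 p)]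
    exact (Finset.sum_subtype (p := fun p : Fin n × Fin n => p.1 ≤ p.2)
      (Finset.univ.filter (fun p : Fin n × Fin n => p.1 ≤ p.2))
      (fun x => by simp) (fun p => G p + if p.1 = p.2 then 0 else G p.swap)).symm
  have h2a : (∑ p ∈ Finset.univ.filter (fun p : Fin n × Fin n => p.1 ≤ p.2),
      if p.1 = p.2 then (0:ℝ) else G p.swap)
      = ∑ p ∈ Finset.univ.filter (fun p : Fin n × Fin n => p.1 < p.2), G p.swap := by
    rw [Finset.sum_filter]
    rw [Finset.sum_filter]
    apply Finset.sum_congr rfl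
    intro p _
    by_cases h1 : p.1 ≤ p.2 <;> by_cases h2 : p.1 = p.2 <;>
      simp [h1, h2, lt_iff_le_and_ne, *]
  have h2b : (∑ p ∈ Finset.univ.filter (fun p : Fin n × Fin n => p.1 < p.2), G p.swap)
      = ∑ p ∈ Finset.univ.filter (fun p : Fin n × Fin n => p.2 < p.1), G p := by
    apply Finset.sum_nbij' (fun p => Prod.swap p) (fun p => Prod.swap p) <;>
      simp [Prod.swap]
  have h3 : (∑ p : Fin n × Fin n, G p)
      = (∑ p ∈ Finset.univ.filter (fun p : Fin n × Fin n => p.1 ≤ p.2), G p)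
      + ∑ p ∈ Finset.univ.filter (fun p : Fin n × Fin n => p.2 < p.1), G p := by
    rw [← Finset.sum_filter_add_sum_filter_not Finset.univ (fun p : Fin n × Fin n => p.1 ≤ p.2) G]
    congr 1
    apply Finset.sum_congr _ (fun _ _ => rfl)
    apply Finset.filter_congr
    intro p _
    simp [not_le]
  rw [hLHS, hRHS, Finset.sum_add_distrib, h2a, h2b, h3]

lemma dot_symm {n : ℕ} {P : Matrix (Fin n) (Fin n) ℝ} (hP : Pᵀ = P) (a b : Fin n → ℝ) :
    a ⬝ᵥ P.mulVec b = b ⬝ᵥ P.mulVec a := by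
  simp only [dotProduct, mulVec, Finset.mul_sum]
  rw [Finset.sum_comm]
  apply Finset.sum_congr rfl
  intro i _
  apply Finset.sum_congr rfl
  intro j _
  rw [symm_apply hP j i]
  ring

lemma vfun_eq_zero {n : ℕ} {Q : Matrix (Fin n) (Fin n) ℝ} (hQ : Qᵀ = Q) (h : vfun Q = 0) :
    Q = 0 := by
  ext i j
  rcases le_or_gt i j with hij | hij
  · have := congrFun h ⟨(i, j), hij⟩
    simp only [vfun, Pi.zero_apply] at this
    by_cases hd : i = j
    · simpa [hd] using this
    · simp only [hd, if_false] at this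
      have : Q i j = 0 := by linarith
      simpa using this
  · have := congrFun h ⟨(j, i), hij.le⟩
    simp only [vfun, Pi.zero_apply] at this
    have hd : ¬ j = i := fun hc => absurd hc.ge (not_le.mpr hij)
    simp only [hd, if_false] at this
    have hji : Q j i = 0 := by linarith
    rw [Matrix.zero_apply, ← symm_apply hQ i j]
    exact hji

lemma kron_mulVec {n : ℕ} (N : Matrix (Fin n) (Fin n) ℝ) (z : Fin n → ℝ) :
    ((1 : Matrix (Fin n) (Fin n) ℝ) ⊗ₖ N).mulVec (kron z z) = kron z (N.mulVec z) := by
  ext p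
  rcases p with ⟨i, j⟩
  simp only [mulVec, dotProduct, kron]
  rw [Fintype.sum_prod_type]
  simp only [Matrix.kroneckerMap_apply, Matrix.one_apply]
  have : ∀ a : Fin n, ∑ b : Fin n, (if i = a then (1:ℝ) else 0) * N j b * (z a * z b)
      = (if i = a then 1 else 0) * z a * ∑ b, N j b * z b := by
    intro a
    rw [Finset.mul_sum]
    apply Finset.sum_congr rfl
    intro b _
    ring
  calc ∑ a : Fin n, ∑ b : Fin n, (if i = a then (1:ℝ) else 0) * N j b * (z a * z b)
      = ∑ a : Fin n, (if i = a then (1:ℝ) else 0) * z a * ∑ b, N j b * z b :=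
        Finset.sum_congr rfl (fun a _ => this a)
    _ = z i * ∑ b, N j b * z b := by simp [Finset.sum_ite_eq, mulVec, dotProduct]
    _ = z i * (N.mulVec z) j := by simp [mulVec, dotProduct]

lemma integral_dot {ι : Type*} [Fintype ι] {F : ℝ → ι → ℝ} {a b : ℝ} (hF : Continuous F)
    (c : ι → ℝ) :
    (∫ τ in a..b, F τ) ⬝ᵥ c = ∫ τ in a..b, F τ ⬝ᵥ c := by
  have hint : IntervalIntegrable F MeasureTheory.volume a b := hF.intervalIntegrable a b
  have hcomp : ∀ p : ι, (∫ τ in a..b, F τ) p = ∫ τ in a..b, F τ p := by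
    intro p
    exact ((ContinuousLinearMap.proj (R := ℝ) (φ := fun _ : ι => ℝ) p).intervalIntegral_comp_comm
      hint).symm
  simp only [dotProduct]
  rw [Finset.sum_congr rfl (fun p _ => by rw [hcomp p])]
  calc ∑ p : ι, (∫ τ in a..b, F τ p) * c p
      = ∑ p : ι, ∫ τ in a..b, F τ p * c p :=
        Finset.sum_congr rfl (fun p _ => (intervalIntegral.integral_mul_const _ _).symm)
    _ = ∫ τ in a..b, ∑ p : ι, F τ p * c p :=
        (intervalIntegral.integral_finset_sum (fun p _ =>
          (((continuous_apply p).comp hF).mul continuous_const).intervalIntegrable a b)).symm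

lemma hasDerivAt_quadform {n : ℕ} {x : ℝ → Fin n → ℝ} {v : Fin n → ℝ} {τ : ℝ}
    (P : Matrix (Fin n) (Fin n) ℝ) (hd : HasDerivAt x v τ) :
    HasDerivAt (fun s => x s ⬝ᵥ P.mulVec (x s))
      (v ⬝ᵥ P.mulVec (x τ) + x τ ⬝ᵥ P.mulVec v) τ := by
  have hcomp := hasDerivAt_pi.mp hd
  have hinner : ∀ i : Fin n, HasDerivAt (fun s => (P.mulVec (x s)) i) ((P.mulVec v) i) τ := by
    intro i
    simp only [mulVec, dotProduct]
    exact HasDerivAt.fun_sum (fun j _ => (hcomp j).const_mul (P i j))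
  have hterm : ∀ i : Fin n, HasDerivAt (fun s => x s i * (P.mulVec (x s)) i)
      (v i * (P.mulVec (x τ)) i + x τ i * (P.mulVec v) i) τ :=
    fun i => (hcomp i).mul (hinner i)
  have := HasDerivAt.fun_sum (fun i (_ : i ∈ Finset.univ) => hterm i)
  simp only [dotProduct]
  refine this.congr_deriv ?_
  rw [Finset.sum_add_distrib]

lemma cont_dot {n : ℕ} {w1 w2 : ℝ → Fin n → ℝ} (h1 : Continuous w1) (h2 : Continuous w2)
    (P : Matrix (Fin n) (Fin n) ℝ) :
    Continuous fun τ => w1 τ ⬝ᵥ P.mulVec (w2 τ) := by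
  simp only [dotProduct, mulVec]
  apply continuous_finset_sum
  intro i _
  apply ((continuous_apply i).comp h1).mul
  apply continuous_finset_sum
  intro j _
  exact continuous_const.mul ((continuous_apply j).comp h2)

lemma cont_Bfun {n : ℕ} {x y : ℝ → Fin n → ℝ} (hx : Continuous x) (hy : Continuous y) :
    Continuous fun τ => Bfun (x τ) (y τ) := by
  apply continuous_pi
  intro p
  simp only [Bfun]
  split_ifs
  · exact ((continuous_apply _).comp hx).mul ((continuous_apply _).comp hy)
  · exact ((((continuous_apply _).comp hx).mul ((continuous_apply _).comp hy)).add
      (((continuous_apply _).comp hx).mul ((continuous_apply _).comp hy))).div_const 2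

section LyapHelpers
open Polynomial

lemma charpoly_root_mem_spectrum {n : ℕ} (M : Matrix (Fin n) (Fin n) ℂ) (μ : ℂ)
    (h : M.charpoly.eval μ = 0) : μ ∈ spectrum ℂ M := by
  rw [spectrum.mem_iff, Matrix.isUnit_iff_isUnit_det, isUnit_iff_ne_zero, not_not]
  have h1 : M.charpoly.eval μ = ((scalar (Fin n)) μ - M).det := by
    rw [Matrix.charpoly, _root_.eval_det, matPolyEquiv_charmatrix, eval_sub, eval_X, eval_C]
  have h2 : (algebraMap ℂ (Matrix (Fin n) (Fin n) ℂ)) μ = (scalar (Fin n)) μ := rfl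
  rw [h2, ← h1, h]

lemma spectrum_transpose {n : ℕ} (M : Matrix (Fin n) (Fin n) ℂ) :
    spectrum ℂ Mᵀ = spectrum ℂ M := by
  have key : ∀ N : Matrix (Fin n) (Fin n) ℂ, ∀ μ : ℂ,
      (algebraMap ℂ (Matrix (Fin n) (Fin n) ℂ)) μ - Nᵀ = ((algebraMap ℂ _) μ - N)ᵀ := by
    intro N μ; ext i j; by_cases hij : i = j <;>
      simp [Matrix.algebraMap_matrix_apply, Matrix.transpose_apply, hij, eq_comm]
  ext μ
  simp only [spectrum.mem_iff, Matrix.isUnit_iff_isUnit_det]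
  rw [key, Matrix.det_transpose]

lemma neg_mem_spectrum_neg {n : ℕ} (M : Matrix (Fin n) (Fin n) ℂ) (μ : ℂ)
    (h : μ ∈ spectrum ℂ (-M)) : -μ ∈ spectrum ℂ M := by
  rw [spectrum.mem_iff] at h ⊢
  intro hc; apply h
  have : (algebraMap ℂ (Matrix (Fin n) (Fin n) ℂ)) μ - (-M)
      = -((algebraMap ℂ _) (-μ) - M) := by
    rw [map_neg]; abel
  rw [this, IsUnit.neg_iff]
  exact hc

lemma lyap_inj {n : ℕ} {A0 : Matrix (Fin n) (Fin n) ℝ} (hA : IsHurwitz A0)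
    {P : Matrix (Fin n) (Fin n) ℝ} (hP : A0ᵀ * P + P * A0 = 0) : P = 0 := by
  set φ := algebraMap ℝ ℂ with hφ
  set M : Matrix (Fin n) (Fin n) ℂ := A0.map φ with hM
  set Q : Matrix (Fin n) (Fin n) ℂ := P.map φ with hQ
  have hMQ : Mᵀ * Q = Q * (-M) := by
    have h2 : Mᵀ * Q + Q * M = 0 := by
      ext i j
      have h0 := congrFun (congrFun hP i) j
      simp only [Matrix.add_apply, Matrix.mul_apply, Matrix.transpose_apply, hM, hQ,
        Matrix.map_apply, Matrix.zero_apply] at h0 ⊢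
      have := congrArg (fun r : ℝ => (r : ℂ)) h0
      push_cast at this
      convert this using 2
      all_goals simp [hφ]
    rw [mul_neg, eq_neg_iff_add_eq_zero]
    exact h2
  have hpow : ∀ k : ℕ, Mᵀ ^ k * Q = Q * (-M) ^ k := by
    intro k; induction k with
    | zero => simp
    | succ k ih =>
      rw [pow_succ, pow_succ, mul_assoc, hMQ, ← mul_assoc, ih, mul_assoc]
  have haeval : ∀ p : ℂ[X], (aeval Mᵀ) p * Q = Q * (aeval (-M)) p := by
    intro p
    induction p using Polynomial.induction_on' with
    | add p q hp hq => rw [map_add, map_add, add_mul, mul_add, hp, hq]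
    | monomial k a =>
      rw [aeval_monomial, aeval_monomial, mul_assoc, hpow k, ← mul_assoc,
        Algebra.commutes a Q, mul_assoc]
  set q : ℂ[X] := (-M).charpoly with hq
  have hCH : (aeval Mᵀ) q * Q = 0 := by
    rw [haeval, hq, Matrix.aeval_self_charpoly, mul_zero]
  have hunit : IsUnit ((aeval Mᵀ) q) := by
    have key : ∀ s : Multiset ℂ, (∀ μ ∈ s, μ ∈ spectrum ℂ (-M)) →
        IsUnit ((aeval Mᵀ) (s.map (fun a => X - C a)).prod) := by
      intro s
      induction s using Multiset.induction with
      | empty => simp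
      | cons a s ih =>
        intro hmem
        rw [Multiset.map_cons, Multiset.prod_cons, _root_.map_mul]
        apply IsUnit.mul
        · rw [map_sub, aeval_X, aeval_C]
          have ha : a ∈ spectrum ℂ (-M) := hmem a (Multiset.mem_cons_self a s)
          have hre : 0 < a.re := by
            have h1 : (-a).re < 0 := hA (-a) (neg_mem_spectrum_neg M a ha)
            simpa [Complex.neg_re] using h1
          have hnotmem : a ∉ spectrum ℂ Mᵀ := by
            rw [spectrum_transpose]
            intro hc
            exact absurd (hA a hc) (not_lt.mpr hre.le)
          rw [spectrum.mem_iff, not_not] at hnotmem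
          rw [← neg_sub ((algebraMap ℂ (Matrix (Fin n) (Fin n) ℂ)) a) Mᵀ, IsUnit.neg_iff]
          exact hnotmem
        · exact ih (fun μ hμ => hmem μ (Multiset.mem_cons_of_mem hμ))
    have hmonic : q.Monic := Matrix.charpoly_monic _
    have hsplit : Splits q := IsAlgClosed.splits q
    have hfact := hsplit.eq_prod_roots_of_monic hmonic
    rw [hfact]
    apply key
    intro μ hμ
    exact charpoly_root_mem_spectrum (-M) μ (Polynomial.isRoot_of_mem_roots hμ)
  have hQ0 : Q = 0 := hunit.mul_left_cancel (by rw [hCH, mul_zero])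
  ext i j
  have := congrFun (congrFun hQ0 i) j
  simp only [hQ, Matrix.map_apply, Matrix.zero_apply, hφ, Complex.coe_algebraMap] at this ⊢
  exact_mod_cast this

end LyapHelpers

lemma cont_mulVecM {n m : ℕ} (M : Matrix (Fin n) (Fin m) ℝ) {w : ℝ → Fin m → ℝ}
    (hw : Continuous w) : Continuous fun τ => M.mulVec (w τ) := by
  apply continuous_pi
  intro i
  simp only [mulVec, dotProduct]
  apply continuous_finset_sum
  intro j _
  exact continuous_const.mul ((continuous_apply j).comp hw)

/-- If the data matrix `I_{B(x,x)}` (rows `∫ B(x,x)ᵀ dτ` over consecutive sample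
intervals) has full column rank and `Aᵢ = A − B Kᵢ` is Hurwitz, then the EIRL regression
matrix `Θᵢ = δ_{xx} − 2 [I_{B(x,x)} Wᵢᵀ + I_{B(x,gu)} + I_{B(x,w)}]` has full column rank
(here full column rank is expressed as injectivity of `mulVec`). -/
theorem eirl_theta_full_rank {n m l : ℕ}
    (A : Matrix (Fin n) (Fin n) ℝ) (B : Matrix (Fin n) (Fin m) ℝ)
    (Ki : Matrix (Fin m) (Fin n) ℝ)
    (hKi : IsHurwitz (A - B * Ki))
    (W : Matrix (SymIdx n) (Fin n × Fin n) ℝ)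
    (hW : ∀ x y : Fin n → ℝ, Bfun x y = W.mulVec (kron x y))
    (Wr : Matrix (Fin n × Fin n) (SymIdx n) ℝ)
    (hWr : ∀ x : Fin n → ℝ, kron x x = Wr.mulVec (Bfun x x))
    (f : (Fin n → ℝ) → (Fin n → ℝ)) (g : (Fin n → ℝ) → Matrix (Fin n) (Fin m) ℝ)
    (u : ℝ → (Fin m → ℝ)) (x : ℝ → (Fin n → ℝ))
    (hf : Continuous f) (hg : Continuous g) (hu : Continuous u)
    (hx : ∀ τ : ℝ, HasDerivAt x (f (x τ) + (g (x τ)).mulVec (u τ)) τ)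
    (t : Fin (l + 1) → ℝ) (ht : StrictMono t)
    (IB Θ : Matrix (Fin l) (SymIdx n) ℝ)
    (hIB : ∀ k : Fin l,
      IB k = ∫ τ in t k.castSucc..t k.succ, Bfun (x τ) (x τ))
    (hΘ : ∀ k : Fin l,
      Θ k = Bfun (x (t k.succ) + x (t k.castSucc)) (x (t k.succ) - x (t k.castSucc)) -
        (2 : ℝ) • ((W * ((1 : Matrix (Fin n) (Fin n) ℝ) ⊗ₖ (B * Ki)) * Wr).mulVec (IB k) +
          (∫ τ in t k.castSucc..t k.succ, Bfun (x τ) ((g (x τ)).mulVec (u τ))) +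
          (∫ τ in t k.castSucc..t k.succ, Bfun (x τ) (f (x τ) - A.mulVec (x τ)))))
    (hIBrank : ∀ c : SymIdx n → ℝ, IB.mulVec c = 0 → c = 0) :
    ∀ c : SymIdx n → ℝ, Θ.mulVec c = 0 → c = 0 := by
  classical
  intro c hc
  set A0 : Matrix (Fin n) (Fin n) ℝ := A - B * Ki with hA0
  -- build the symmetric matrix P with vfun P = c
  set P : Matrix (Fin n) (Fin n) ℝ := Matrix.of (fun i j =>
    if h : i ≤ j then (if i = j then c ⟨(i, j), h⟩ else c ⟨(i, j), h⟩ / 2)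
    else c ⟨(j, i), (not_le.mp h).le⟩ / 2) with hPdef
  have hPapp : ∀ i j, P i j =
      if h : i ≤ j then (if i = j then c ⟨(i, j), h⟩ else c ⟨(i, j), h⟩ / 2)
      else c ⟨(j, i), (not_le.mp h).le⟩ / 2 := fun i j => rfl
  have hPsym : Pᵀ = P := by
    ext i j
    rw [Matrix.transpose_apply, hPapp, hPapp]
    rcases lt_trichotomy i j with h | h | h
    · rw [dif_neg (not_le.mpr h), dif_pos h.le, if_neg h.ne]
    · subst h; simp
    · rw [dif_pos h.le, if_neg h.ne, dif_neg (not_le.mpr h)]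
  have hvP : vfun P = c := by
    funext p; rcases p with ⟨⟨i, j⟩, hij⟩
    simp only [vfun]
    by_cases h : i = j
    · subst h
      rw [if_pos rfl, hPapp, dif_pos (le_refl i), if_pos rfl]
    · rw [if_neg h, hPapp, dif_pos hij, if_neg h]
      ring
  -- continuity facts
  have hxc : Continuous x := by
    rw [continuous_iff_continuousAt]; intro τ; exact (hx τ).continuousAt
  set v : ℝ → Fin n → ℝ := fun τ => f (x τ) + (g (x τ)).mulVec (u τ) with hv
  have hvcont : Continuous v := by
    apply (hf.comp hxc).add
    apply continuous_pi; intro i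
    simp only [mulVec, dotProduct]
    apply continuous_finset_sum; intro j _
    exact ((continuous_apply j).comp ((continuous_apply i).comp (hg.comp hxc))).mul
      ((continuous_apply j).comp hu)
  have hgu_cont : Continuous (fun τ => (g (x τ)).mulVec (u τ)) := by
    have := hvcont.sub (hf.comp hxc)
    refine this.congr (fun τ => ?_)
    simp [hv]
  have hw_cont : Continuous (fun τ => f (x τ) - A.mulVec (x τ)) :=
    (hf.comp hxc).sub (cont_mulVecM A hxc)
  set Q : Matrix (Fin n) (Fin n) ℝ := A0ᵀ * P + P * A0 with hQdef
  have hQsym : Qᵀ = Q := by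
    rw [hQdef, Matrix.transpose_add, Matrix.transpose_mul, Matrix.transpose_mul,
      Matrix.transpose_transpose, hPsym]
    abel
  set Mmat : Matrix (SymIdx n) (SymIdx n) ℝ :=
    W * ((1 : Matrix (Fin n) (Fin n) ℝ) ⊗ₖ (B * Ki)) * Wr with hMmat
  have hMmatVec : ∀ z : Fin n → ℝ,
      Mmat.mulVec (Bfun z z) = Bfun z ((B * Ki).mulVec z) := by
    intro z
    rw [hMmat, ← Matrix.mulVec_mulVec, ← Matrix.mulVec_mulVec, ← hWr, kron_mulVec, ← hW]
  -- key identity per row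
  have key : ∀ k : Fin l, Θ k ⬝ᵥ c = IB k ⬝ᵥ vfun Q := by
    intro k
    set ta := t k.castSucc with hta
    set tb := t k.succ with htb
    -- integrands
    have hF1 : Continuous (fun τ => Bfun (x τ) (x τ)) := cont_Bfun hxc hxc
    have hF2 : Continuous (fun τ => Bfun (x τ) ((g (x τ)).mulVec (u τ))) :=
      cont_Bfun hxc hgu_cont
    have hF3 : Continuous (fun τ => Bfun (x τ) (f (x τ) - A.mulVec (x τ))) :=
      cont_Bfun hxc hw_cont
    -- scalar integrands
    set ψ0 : ℝ → ℝ := fun τ => 2 * (x τ ⬝ᵥ P.mulVec (v τ)) with hψ0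
    set ψ1 : ℝ → ℝ := fun τ => x τ ⬝ᵥ P.mulVec ((B * Ki).mulVec (x τ)) with hψ1
    set ψ2 : ℝ → ℝ := fun τ => x τ ⬝ᵥ P.mulVec ((g (x τ)).mulVec (u τ)) with hψ2
    set ψ3 : ℝ → ℝ := fun τ => x τ ⬝ᵥ P.mulVec (f (x τ) - A.mulVec (x τ)) with hψ3
    have hψ0c : Continuous ψ0 := continuous_const.mul (cont_dot hxc hvcont P)
    have hψ1c : Continuous ψ1 := cont_dot hxc (cont_mulVecM (B * Ki) hxc) P
    have hψ2c : Continuous ψ2 := cont_dot hxc hgu_cont P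
    have hψ3c : Continuous ψ3 := cont_dot hxc hw_cont P
    -- Term 0 : FTC
    have T0 : Bfun (x tb + x ta) (x tb - x ta) ⬝ᵥ c = ∫ τ in ta..tb, ψ0 τ := by
      rw [← hvP, dot_Bfun_vfun P hPsym]
      have hderiv : ∀ τ ∈ Set.uIcc ta tb,
          HasDerivAt (fun s => x s ⬝ᵥ P.mulVec (x s)) (ψ0 τ) τ := by
        intro τ _
        have h1 := hasDerivAt_quadform P (hx τ)
        convert h1 using 1
        rw [hψ0]
        show 2 * (x τ ⬝ᵥ P.mulVec (v τ)) = v τ ⬝ᵥ P.mulVec (x τ) + x τ ⬝ᵥ P.mulVec (v τ)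
        rw [two_mul, dot_symm hPsym (v τ) (x τ)]
      rw [intervalIntegral.integral_eq_sub_of_hasDerivAt hderiv
        (hψ0c.intervalIntegrable ta tb)]
      rw [Matrix.mulVec_sub, dotProduct_sub, add_dotProduct, add_dotProduct,
        dot_symm hPsym (x ta) (x tb)]
      ring
    -- Term 1 : the W-Kronecker term
    have T1 : (Mmat.mulVec (IB k)) ⬝ᵥ c = ∫ τ in ta..tb, ψ1 τ := by
      rw [← hvP]
      rw [dotProduct_comm, dotProduct_mulVec, dotProduct_comm]
      rw [hIB k, ← hta, ← htb]
      rw [integral_dot hF1]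
      apply intervalIntegral.integral_congr
      intro τ _
      show Bfun (x τ) (x τ) ⬝ᵥ (vfun P ᵥ* Mmat) = ψ1 τ
      rw [dotProduct_comm, ← dotProduct_mulVec, dotProduct_comm, hMmatVec (x τ),
        dot_Bfun_vfun P hPsym]
    -- Terms 2, 3
    have T2 : (∫ τ in ta..tb, Bfun (x τ) ((g (x τ)).mulVec (u τ))) ⬝ᵥ c
        = ∫ τ in ta..tb, ψ2 τ := by
      rw [← hvP, integral_dot hF2]
      exact intervalIntegral.integral_congr (fun τ _ => dot_Bfun_vfun P hPsym _ _)
    have T3 : (∫ τ in ta..tb, Bfun (x τ) (f (x τ) - A.mulVec (x τ))) ⬝ᵥ c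
        = ∫ τ in ta..tb, ψ3 τ := by
      rw [← hvP, integral_dot hF3]
      exact intervalIntegral.integral_congr (fun τ _ => dot_Bfun_vfun P hPsym _ _)
    -- RHS
    have TR : IB k ⬝ᵥ vfun Q = ∫ τ in ta..tb, (x τ ⬝ᵥ Q.mulVec (x τ)) := by
      rw [hIB k, ← hta, ← htb, integral_dot hF1]
      exact intervalIntegral.integral_congr (fun τ _ => dot_Bfun_vfun Q hQsym _ _)
    -- assemble
    rw [hΘ k, ← hta, ← htb, sub_dotProduct, smul_dotProduct, add_dotProduct,
      add_dotProduct, T0, T1, T2, T3, TR, smul_eq_mul]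
    rw [← intervalIntegral.integral_add (hψ1c.intervalIntegrable ta tb)
      (hψ2c.intervalIntegrable ta tb)]
    rw [← intervalIntegral.integral_add (f := fun τ => ψ1 τ + ψ2 τ) ((hψ1c.add hψ2c).intervalIntegrable ta tb)
      (hψ3c.intervalIntegrable ta tb)]
    rw [← intervalIntegral.integral_const_mul]
    rw [← intervalIntegral.integral_sub (g := fun τ => 2 * (ψ1 τ + ψ2 τ + ψ3 τ)) (hψ0c.intervalIntegrable ta tb)
      ((continuous_const.mul ((hψ1c.add hψ2c).add hψ3c)).intervalIntegrable ta tb)]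
    apply intervalIntegral.integral_congr
    intro τ _
    show ψ0 τ - 2 * (ψ1 τ + ψ2 τ + ψ3 τ) = x τ ⬝ᵥ Q.mulVec (x τ)
    have hQv : x τ ⬝ᵥ Q.mulVec (x τ) = 2 * (x τ ⬝ᵥ P.mulVec (A0.mulVec (x τ))) := by
      rw [hQdef, Matrix.add_mulVec, dotProduct_add, ← Matrix.mulVec_mulVec,
        ← Matrix.mulVec_mulVec, dotProduct_mulVec (x τ) A0ᵀ, Matrix.vecMul_transpose,
        dot_symm hPsym (A0.mulVec (x τ)) (x τ)]
      ring
    have hA0v : A0.mulVec (x τ) = A.mulVec (x τ) - (B * Ki).mulVec (x τ) := by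
      rw [hA0, Matrix.sub_mulVec]
    rw [hQv, hA0v]
    simp only [hψ0, hψ1, hψ2, hψ3, hv]
    simp only [Matrix.mulVec_add, dotProduct_add, Matrix.mulVec_sub, dotProduct_sub]
    ring
  -- conclude
  have hΘc : Θ.mulVec c = IB.mulVec (vfun Q) := by
    funext k
    exact key k
  rw [hc] at hΘc
  have hQ0 : Q = 0 := vfun_eq_zero hQsym (hIBrank _ hΘc.symm)
  have hP0 : P = 0 := lyap_inj hKi (by rw [← hQdef, hQ0])
  rw [← hvP, hP0]
  funext p
  simp [vfun]
end

section
/- Let K_i be stabilizing and P_i = P_i^T > 0 solve (A − BK_i)^T P_i + P_i(A − BK_i) + K_i^T R K_i + Q = 0. Then for any K ∈ R^{m×n}, the identity (A − BK)^T P_i + P_i(A − BK) + K^T R K + Q = (K − K_{i+1})^T R (K − K_{i+1}) − (K_i − K_{i+1})^T R (K_i − K_{i+1}) + (K − K_i)^T R K_i + K_i^T R (K − K_i) − (K − K_i)^T R (K − K_i) + ... simplifies to: (A − BK_{i+1})^T P_i + P_i(A − BK_{i+1}) = −Q − K_{i+1}^T R K_{i+1} − (K_{i+1} − K_i)^T R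 (K_{i+1} − K_i), where K_{i+1} = R^{-1} B^T P_i. -/
open Matrix

/-- Completing-the-square identity of Kleinman's algorithm: if `Pᵢ` is symmetric and solves
the closed-loop Lyapunov equation for the stabilizing gain `Kᵢ`, and `Kᵢ₊₁ = R⁻¹ Bᵀ Pᵢ`,
then `(A − B Kᵢ₊₁)ᵀ Pᵢ + Pᵢ (A − B Kᵢ₊₁)
  = −Q − Kᵢ₊₁ᵀ R Kᵢ₊₁ − (Kᵢ₊₁ − Kᵢ)ᵀ R (Kᵢ₊₁ − Kᵢ)`. -/
theorem kleinman_completing_square {n m : ℕ}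
    (A : Matrix (Fin n) (Fin n) ℝ) (B : Matrix (Fin n) (Fin m) ℝ)
    (Q : Matrix (Fin n) (Fin n) ℝ) (R : Matrix (Fin m) (Fin m) ℝ)
    (Ki Kip : Matrix (Fin m) (Fin n) ℝ) (Pi : Matrix (Fin n) (Fin n) ℝ)
    (hQ : Q.IsSymm) (hR : R.IsSymm) (hRpd : R.PosDef)
    (hPi : Pi.IsSymm)
    (hALE : (A - B * Ki)ᵀ * Pi + Pi * (A - B * Ki) + Kiᵀ * R * Ki + Q = 0)
    (hKip : Kip = R⁻¹ * Bᵀ * Pi) :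
    (A - B * Kip)ᵀ * Pi + Pi * (A - B * Kip) =
      -Q - Kipᵀ * R * Kip - (Kip - Ki)ᵀ * R * (Kip - Ki) := by
  have hdet : IsUnit R.det := isUnit_iff_ne_zero.mpr hRpd.det_pos.ne'
  have h1 : Bᵀ * Pi = R * Kip := by
    rw [hKip, ← Matrix.mul_assoc, ← Matrix.mul_assoc, Matrix.mul_nonsing_inv R hdet]
    simp
  have h2 : Pi * B = Kipᵀ * R := by
    have := congrArg Matrix.transpose h1
    simpa [Matrix.transpose_mul, hPi.eq, hR.eq] using this
  have key : (A - B * Kip)ᵀ * Pi + Pi * (A - B * Kip) + Q + Kipᵀ * R * Kip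
      + (Kip - Ki)ᵀ * R * (Kip - Ki)
      = (A - B * Ki)ᵀ * Pi + Pi * (A - B * Ki) + Kiᵀ * R * Ki + Q := by
    simp only [Matrix.transpose_sub, Matrix.transpose_mul, Matrix.sub_mul, Matrix.mul_sub]
    rw [Matrix.mul_assoc Kipᵀ Bᵀ Pi, Matrix.mul_assoc Kiᵀ Bᵀ Pi, h1,
      ← Matrix.mul_assoc Pi B Kip, ← Matrix.mul_assoc Pi B Ki, h2]
    simp only [Matrix.mul_assoc]
    abel
  have h0 : (A - B * Kip)ᵀ * Pi + Pi * (A - B * Kip)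
      + (Q + (Kipᵀ * R * Kip + (Kip - Ki)ᵀ * R * (Kip - Ki))) = 0 := by
    rw [← hALE, ← key]; abel
  have := eq_neg_of_add_eq_zero_left h0
  rw [this]; abel
end
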